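/- For a doubly-connected graph G of order n ≥ 4, β(G) + β(Ḡ) = 2 if and only if G is isomorphic to the path P4 on 4 vertices. -/

import Mathlib

open SimpleGraph

/-- `S` is a locating set of `G`: every vertex outside `S` is at finite distance from
some vertex of `S`, and any two distinct vertices have distinct vectors of distances
to `S`. -/
def IsLocatingSet {V : Type*} (G : SimpleGraph V) (S : Set V) : Prop :=
  (∀ v ∉ S, ∃ x ∈ S, G.edist v x ≠ ⊤) ∧
  ∀ u v : V, u ≠ v → ∃ x ∈ S, G.edist u x ≠ G.edist v x

/-- The location number (metric dimension) `β(G)`: the minimum cardinality of a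
locating set of `G`. -/
noncomputable def locNum {V : Type*} [Fintype V] (G : SimpleGraph V) : ℕ :=
  sInf {k | ∃ S : Set V, IsLocatingSet G S ∧ S.ncard = k}

lemma edist_map_le {V W : Type*} {G : SimpleGraph V} {H : SimpleGraph W}
    (f : G →g H) (u v : V) : H.edist (f u) (f v) ≤ G.edist u v := by
  rcases eq_or_ne (G.edist u v) ⊤ with h | h
  · simp [h]
  · obtain ⟨p, hp⟩ := exists_walk_of_edist_ne_top h
    calc H.edist (f u) (f v) ≤ ((p.map f).length : ℕ∞) := edist_le _
    _ = (p.length : ℕ∞) := by rw [Walk.length_map]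
    _ = G.edist u v := by exact_mod_cast hp

lemma iso_edist {V W : Type*} {G : SimpleGraph V} {H : SimpleGraph W}
    (e : G ≃g H) (u v : V) : H.edist (e u) (e v) = G.edist u v := by
  refine le_antisymm (edist_map_le e.toHom u v) ?_
  have := edist_map_le e.symm.toHom (e u) (e v)
  simpa using this

def c4 : Fin 4 ≃ Fin 4 := ⟨![1,3,0,2], ![2,0,3,1], by decide, by decide⟩

def complP4Iso : (pathGraph 4)ᶜ ≃g pathGraph 4 :=
  ⟨c4, by
    intro a b
    simp only [compl_adj, pathGraph_adj]
    revert a b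
    decide⟩

def complIso {V W : Type*} {G : SimpleGraph V} {H : SimpleGraph W} (e : G ≃g H) :
    Gᶜ ≃g Hᶜ :=
  ⟨e.toEquiv, by
    intro a b
    simp only [compl_adj, ne_eq, EmbeddingLike.apply_eq_iff_eq]
    rw [show H.Adj (e.toEquiv a) (e.toEquiv b) ↔ G.Adj a b from e.map_adj_iff]⟩

lemma pathWalk_le {n : ℕ} {i j : Fin n} (p : (pathGraph n).Walk i j) :
    i.val ≤ j.val + p.length := by
  induction p with
  | nil => simp
  | cons h q ih =>
    rw [pathGraph_adj] at h
    rw [Walk.length_cons]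
    omega

lemma pathGraph4_edist (i : Fin 4) : (pathGraph 4).edist i 0 = (i.val : ℕ∞) := by
  have hconn : (pathGraph 4).Connected := pathGraph_connected 3
  obtain ⟨p, hp⟩ := hconn.exists_walk_length_eq_edist i 0
  have hlow : (i.val : ℕ∞) ≤ (pathGraph 4).edist i 0 := by
    rw [← hp]
    have := pathWalk_le p
    simp at this
    exact_mod_cast this
  have a10 : (pathGraph 4).Adj 1 0 := by rw [pathGraph_adj]; decide
  have a21 : (pathGraph 4).Adj 2 1 := by rw [pathGraph_adj]; decide
  have a32 : (pathGraph 4).Adj 3 2 := by rw [pathGraph_adj]; decide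
  have hup : (pathGraph 4).edist i 0 ≤ (i.val : ℕ∞) := by
    fin_cases i
    · simp [edist_self]
    · simpa using edist_le a10.toWalk
    · simpa using edist_le (Walk.cons a21 a10.toWalk)
    · simpa using edist_le (Walk.cons a32 (Walk.cons a21 a10.toWalk))
  exact le_antisymm hup hlow



lemma univ_locating {V : Type*} (G : SimpleGraph V) : IsLocatingSet G Set.univ := by
  constructor
  · intro v hv; exact absurd (Set.mem_univ v) hv
  · intro u v huv
    refine ⟨u, Set.mem_univ u, ?_⟩
    rw [edist_self]
    exact fun h => huv (edist_eq_zero_iff.mp h.symm).symm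

lemma locNum_eq_one_of_iso {V : Type*} [Fintype V] {G : SimpleGraph V}
    (e : G ≃g pathGraph 4) : locNum G = 1 := by
  have hS : IsLocatingSet G {e.symm 0} := by
    have key : ∀ v : V, G.edist v (e.symm 0) = ((e v).val : ℕ∞) := by
      intro v
      have := iso_edist e v (e.symm 0)
      rw [RelIso.apply_symm_apply] at this
      rw [← this, pathGraph4_edist]
    constructor
    · intro v _
      refine ⟨e.symm 0, rfl, ?_⟩
      rw [key]
      exact ENat.coe_ne_top _
    · intro u v huv
      refine ⟨e.symm 0, rfl, ?_⟩
      rw [key, key]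
      have : e u ≠ e v := fun h => huv (e.injective h)
      exact_mod_cast fun h => this (Fin.ext (by exact_mod_cast h))
  have h1 : 1 ∈ {k | ∃ S : Set V, IsLocatingSet G S ∧ S.ncard = 1} := by
    exact ⟨{e.symm 0}, hS, Set.ncard_singleton _⟩
  refine le_antisymm (Nat.sInf_le h1) ?_
  refine le_csInf ⟨1, h1⟩ ?_
  rintro k ⟨S, hSloc, rfl⟩
  by_contra h
  push_neg at h
  interval_cases hk : S.ncard
  have hSempty : S = ∅ := Set.ncard_eq_zero (Set.toFinite S) |>.mp hk
  have hne : e.symm 0 ≠ e.symm 1 := fun h => by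
    have := e.symm.injective h; simp at this
  obtain ⟨x, hx, -⟩ := hSloc.2 _ _ hne
  rw [hSempty] at hx
  exact hx

lemma exists_closer {V : Type*} {G : SimpleGraph V} {u x : V}
    (h : G.edist u x ≠ ⊤) (hne : u ≠ x) :
    ∃ w, G.Adj u w ∧ G.edist w x + 1 = G.edist u x := by
  obtain ⟨p, hp⟩ := exists_walk_of_edist_ne_top h
  cases p with
  | nil => exact absurd rfl hne
  | @cons _ w _ hadj q =>
    refine ⟨w, hadj, le_antisymm ?_ ?_⟩
    · calc G.edist w x + 1 ≤ (q.length : ℕ∞) + 1 := by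
            exact add_le_add (edist_le q) le_rfl
        _ = G.edist u x := by rw [← hp]; push_cast [Walk.length_cons]; ring
    · calc G.edist u x ≤ G.edist u w + G.edist w x := SimpleGraph.edist_triangle
        _ = G.edist w x + 1 := by rw [edist_eq_one_iff_adj.mpr hadj, add_comm]

/-- For a doubly-connected graph `G` of order `n ≥ 4`, `β(G) + β(Ḡ) = 2` iff `G ≅ P₄`. -/
theorem locNum_sum_eq_two_iff_doubly_connected {V : Type*} [Fintype V]
    (G : SimpleGraph V) (hn : 4 ≤ Fintype.card V) (hG : G.Connected)
    (hGc : Gᶜ.Connected) :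
    locNum G + locNum Gᶜ = 2 ↔ Nonempty (G ≃g pathGraph 4) := by
  constructor
  · intro hsum
    -- extract singleton locating sets
    have extract : ∀ (H : SimpleGraph V), locNum H = 1 →
        ∃ x : V, ∀ u v : V, u ≠ v → H.edist u x ≠ H.edist v x := by
      intro H h1
      have hne : {k | ∃ S : Set V, IsLocatingSet H S ∧ S.ncard = k}.Nonempty :=
        ⟨(Set.univ : Set V).ncard, Set.univ, univ_locating H, rfl⟩
      have := Nat.sInf_mem hne
      rw [show sInf {k | ∃ S : Set V, IsLocatingSet H S ∧ S.ncard = k} = locNum H from rfl,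
        h1] at this
      obtain ⟨S, hSloc, hS1⟩ := this
      obtain ⟨x, rfl⟩ := Set.ncard_eq_one.mp hS1
      refine ⟨x, fun u v huv => ?_⟩
      obtain ⟨x', hx', h⟩ := hSloc.2 u v huv
      rwa [Set.mem_singleton_iff.mp hx'] at h
    -- both locNums are ≥ 1
    have pos : ∀ (H : SimpleGraph V), 1 ≤ locNum H := by
      intro H
      rw [Nat.one_le_iff_ne_zero]
      intro h0
      have hne : {k | ∃ S : Set V, IsLocatingSet H S ∧ S.ncard = k}.Nonempty :=
        ⟨(Set.univ : Set V).ncard, Set.univ, univ_locating H, rfl⟩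
      have := Nat.sInf_mem hne
      rw [show sInf {k | ∃ S : Set V, IsLocatingSet H S ∧ S.ncard = k} = locNum H from rfl,
        h0] at this
      obtain ⟨S, hSloc, hS0⟩ := this
      have hSempty : S = ∅ := Set.ncard_eq_zero (Set.toFinite S) |>.mp hS0
      have : 1 < Fintype.card V := by omega
      obtain ⟨u, v, huv⟩ := Fintype.exists_pair_of_one_lt_card this
      obtain ⟨x, hx, -⟩ := hSloc.2 u v huv
      rw [hSempty] at hx
      exact hx
    have hG1 : locNum G = 1 := by have := pos G; have := pos Gᶜ; omega
    have hGc1 : locNum Gᶜ = 1 := by have := pos G; have := pos Gᶜ; omega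
    obtain ⟨x, hx⟩ := extract G hG1
    obtain ⟨y, hy⟩ := extract Gᶜ hGc1
    -- distances as naturals
    have hfin : ∀ v, G.edist v x ≠ ⊤ :=
      fun v => edist_ne_top_iff_reachable.mpr (hG.preconnected v x)
    have hfinc : ∀ v, Gᶜ.edist v y ≠ ⊤ :=
      fun v => edist_ne_top_iff_reachable.mpr (hGc.preconnected v y)
    set d : V → ℕ := fun v => (G.edist v x).toNat with hd_def
    set dc : V → ℕ := fun v => (Gᶜ.edist v y).toNat with hdc_def
    have hd : ∀ v, (d v : ℕ∞) = G.edist v x := fun v => ENat.coe_toNat (hfin v)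
    have hdc : ∀ v, (dc v : ℕ∞) = Gᶜ.edist v y := fun v => ENat.coe_toNat (hfinc v)
    have hdinj : Function.Injective d := by
      intro a b hab
      by_contra hne
      exact hx a b hne (by rw [← hd a, ← hd b, hab])
    have hdcinj : Function.Injective dc := by
      intro a b hab
      by_contra hne
      exact hy a b hne (by rw [← hdc a, ← hdc b, hab])
    -- adjacent vertices have d differing by exactly 1
    have dstep : ∀ {H : SimpleGraph V} (z : V) (e : V → ℕ),
        (∀ v, (e v : ℕ∞) = H.edist v z) → ∀ {u v : V}, H.Adj u v → e u ≤ e v + 1 := by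
      intro H z e he u v hadj
      have h1 : H.edist u z ≤ H.edist v z + 1 := by
        calc H.edist u z ≤ H.edist u v + H.edist v z := SimpleGraph.edist_triangle
          _ = H.edist v z + 1 := by rw [edist_eq_one_iff_adj.mpr hadj, add_comm]
      rw [← he u, ← he v] at h1
      exact_mod_cast h1
    -- degree of x in G is ≤ 1, in Gᶜ is ≤ 2
    classical
    have hA : (Finset.univ.filter (fun v => G.Adj x v)).card ≤ 1 := by
      refine Finset.card_le_one.mpr (fun a ha b hb => ?_)
      simp only [Finset.mem_filter] at ha hb
      apply hdinj
      have h1 : (d a : ℕ∞) = 1 := by rw [hd a]; exact edist_eq_one_iff_adj.mpr ha.2.symm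
      have h2 : (d b : ℕ∞) = 1 := by rw [hd b]; exact edist_eq_one_iff_adj.mpr hb.2.symm
      exact_mod_cast h1.trans h2.symm
    have hB : (Finset.univ.filter (fun v => Gᶜ.Adj x v)).card ≤ 2 := by
      have : ∀ v ∈ Finset.univ.filter (fun v => Gᶜ.Adj x v),
          dc v ∈ ({dc x + 1, dc x - 1} : Finset ℕ) := by
        intro v hv
        simp only [Finset.mem_filter] at hv
        have h1 := dstep y dc hdc hv.2.symm
        have h2 := dstep y dc hdc hv.2
        have h3 : dc v ≠ dc x := fun h => (hdcinj h ▸ hv.2.ne') rfl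
        simp only [Finset.mem_insert, Finset.mem_singleton]
        omega
      calc (Finset.univ.filter (fun v => Gᶜ.Adj x v)).card
          ≤ ({dc x + 1, dc x - 1} : Finset ℕ).card :=
            Finset.card_le_card_of_injOn dc this (fun a _ b _ h => hdcinj h)
        _ ≤ 2 := Finset.card_insert_le _ _ |>.trans (by simp)
    have hcard4 : Fintype.card V = 4 := by
      have hunion : Finset.univ.erase x =
          (Finset.univ.filter (fun v => G.Adj x v)) ∪
          (Finset.univ.filter (fun v => Gᶜ.Adj x v)) := by
        ext v
        simp only [Finset.mem_erase, Finset.mem_union, Finset.mem_filter, Finset.mem_univ,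
          true_and, and_true, ne_eq, compl_adj]
        constructor
        · intro hv
          by_cases h : G.Adj x v
          · exact Or.inl h
          · exact Or.inr ⟨fun he => hv (he.symm), h⟩
        · rintro (h | ⟨h1, h2⟩)
          · exact fun he => (he ▸ h).ne rfl
          · exact fun he => h1 he.symm
      have := Finset.card_union_le
        (Finset.univ.filter (fun v => G.Adj x v)) (Finset.univ.filter (fun v => Gᶜ.Adj x v))
      rw [← hunion, Finset.card_erase_of_mem (Finset.mem_univ x), Finset.card_univ] at this
      omega
    -- descent: all values below d v are attained
    have descent : ∀ (m : ℕ) (v : V), d v = m → ∀ k, k ≤ m → ∃ w, d w = k := by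
      intro m
      induction m with
      | zero => intro v hv k hk; exact ⟨v, by omega⟩
      | succ m ih =>
        intro v hv k hk
        rcases Nat.eq_or_lt_of_le hk with h | h
        · exact ⟨v, by omega⟩
        · have hvx : v ≠ x := by
            intro he
            rw [he] at hv
            simp [hd_def, SimpleGraph.edist_self] at hv
          obtain ⟨w, hadj, hw⟩ := exists_closer (hfin v) hvx
          have hdw : d w = m := by
            have : (d w : ℕ∞) + 1 = (d v : ℕ∞) := by rw [hd, hd]; exact hw
            have : d w + 1 = d v := by exact_mod_cast this
            omega
          exact ih w hdw k (by omega)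
    have hbound : ∀ v, d v < 4 := by
      intro v
      have hsub : Finset.range (d v + 1) ⊆ Finset.image d Finset.univ := by
        intro k hk
        rw [Finset.mem_range] at hk
        obtain ⟨w, hw⟩ := descent (d v) v rfl k (by omega)
        exact Finset.mem_image.mpr ⟨w, Finset.mem_univ w, hw⟩
      have := Finset.card_le_card hsub
      rw [Finset.card_range] at this
      have h2 := Finset.card_image_le (f := d) (s := Finset.univ)
      rw [Finset.card_univ, hcard4] at h2
      omega
    -- build the isomorphism
    set φ : V → Fin 4 := fun v => ⟨d v, hbound v⟩ with hφ_def
    have hφinj : Function.Injective φ := by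
      intro a b hab
      exact hdinj (show d a = d b from congrArg Fin.val hab)
    have hφbij : Function.Bijective φ :=
      (Fintype.bijective_iff_injective_and_card φ).mpr ⟨hφinj, by simp [hcard4]⟩
    have hdx : d x = 0 := by simp [hd_def, SimpleGraph.edist_self]
    refine ⟨⟨Equiv.ofBijective φ hφbij, ?_⟩⟩
    intro a b
    simp only [Equiv.ofBijective_apply, pathGraph_adj]
    show (φ a).val + 1 = (φ b).val ∨ (φ b).val + 1 = (φ a).val ↔ G.Adj a b
    show d a + 1 = d b ∨ d b + 1 = d a ↔ G.Adj a b
    constructor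
    · have key : ∀ {u v : V}, d u + 1 = d v → G.Adj v u := by
        intro u v huv
        have hvx : v ≠ x := fun he => by rw [he, hdx] at huv; omega
        obtain ⟨w, hadj, hw⟩ := exists_closer (hfin v) hvx
        have hdw : d w + 1 = d v := by
          have : (d w : ℕ∞) + 1 = (d v : ℕ∞) := by rw [hd, hd]; exact hw
          exact_mod_cast this
        have : w = u := hdinj (by omega)
        exact this ▸ hadj
      rintro (h | h)
      · exact (key h).symm
      · exact key h
    · intro hadj
      have h1 := dstep x d hd hadj
      have h2 := dstep x d hd hadj.symm
      have h3 : d a ≠ d b := fun h => hadj.ne (hdinj h)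
      omega
  · rintro ⟨e⟩
    rw [locNum_eq_one_of_iso e, locNum_eq_one_of_iso ((complIso e).trans complP4Iso)]
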